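/- Let k ≥ 2, let χ be a k-horosphere in ℍ^{k+1} resting at a boundary point p, and let P be a geodesic k-plane in ℍ^{k+1}. Let ξ ∈ ∂P, let δ be the geodesic joining ξ and p, and let q = δ ∩ χ. Suppose the corresponding statement is known for k = 1 (horocycles and geodesics in ℍ²) with constant R₀ > 1: namely for R > R₀, d(horocycle, geodesic) < R − 1 implies d(intersection point, geodesic) < R. Then the same constant R₀ works for dimension k: for any R > R₀, if d(χ, P) < R − 1 then d(q, P) < R. -/

import Mathlib

/-- The Minkowski form of signature `(m, 1)` on `ℝ^{m+1}`. -/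
def mf (m : ℕ) (x y : Fin (m + 1) → ℝ) : ℝ :=
  -(x 0 * y 0) + ∑ i : Fin m, x i.succ * y i.succ

/-- The hyperboloid model of `ℍ^m`. -/
def Hyp (m : ℕ) : Set (Fin (m + 1) → ℝ) := {x | mf m x x = -1 ∧ 0 < x 0}

/-- Inverse hyperbolic cosine. -/
noncomputable def acosh (x : ℝ) : ℝ := Real.log (x + Real.sqrt (x ^ 2 - 1))

/-- The hyperbolic distance in the hyperboloid model: `d(x,y) = arcosh(-⟨x,y⟩)`. -/
noncomputable def hdist (m : ℕ) (x y : Fin (m + 1) → ℝ) : ℝ := acosh (-(mf m x y))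

/-- The distance between two subsets of the hyperboloid. -/
noncomputable def setDist (m : ℕ) (S T : Set (Fin (m + 1) → ℝ)) : ℝ :=
  sInf {r | ∃ x ∈ S, ∃ y ∈ T, r = hdist m x y}

lemma mf_add_left (m : ℕ) (x y z : Fin (m+1) → ℝ) :
    mf m (x + y) z = mf m x z + mf m y z := by
  simp only [mf, Pi.add_apply, add_mul]
  rw [Finset.sum_add_distrib]; ring

lemma mf_smul_left (m : ℕ) (a : ℝ) (x z : Fin (m+1) → ℝ) :
    mf m (a • x) z = a * mf m x z := by
  simp only [mf, Pi.smul_apply, smul_eq_mul, mul_assoc]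
  rw [← Finset.mul_sum]; ring

lemma mf_comm (m : ℕ) (x y : Fin (m+1) → ℝ) : mf m x y = mf m y x := by
  simp only [mf]
  rw [Finset.sum_congr rfl (fun i _ => mul_comm (x i.succ) (y i.succ))]
  ring

lemma mf_add_right (m : ℕ) (x y z : Fin (m+1) → ℝ) :
    mf m x (y + z) = mf m x y + mf m x z := by
  rw [mf_comm, mf_add_left, mf_comm m y x, mf_comm m z x]

lemma mf_smul_right (m : ℕ) (a : ℝ) (x y : Fin (m+1) → ℝ) :
    mf m x (a • y) = a * mf m x y := by
  rw [mf_comm, mf_smul_left, mf_comm m y x]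

lemma mf_cs (m : ℕ) (x y : Fin (m+1) → ℝ) :
    (∑ i : Fin m, x i.succ * y i.succ) * (∑ i : Fin m, x i.succ * y i.succ) ≤
      (∑ i : Fin m, x i.succ * x i.succ) * (∑ i : Fin m, y i.succ * y i.succ) := by
  have h := Finset.sum_mul_sq_le_sq_mul_sq Finset.univ
    (fun i : Fin m => x i.succ) (fun i : Fin m => y i.succ)
  simpa only [pow_two] using h

lemma mf_sum_sq_nonneg (m : ℕ) (x : Fin (m+1) → ℝ) :
    0 ≤ ∑ i : Fin m, x i.succ * x i.succ :=
  Finset.sum_nonneg fun i _ => mul_self_nonneg _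

lemma mself_le {a b : ℝ} (hb : 0 ≤ b) (h : a * a ≤ b * b) : a ≤ b := by
  by_contra h'
  push_neg at h'
  nlinarith [mul_pos (sub_pos.mpr h') (show (0:ℝ) < a + b by nlinarith)]

lemma mself_lt {a b : ℝ} (hb : 0 ≤ b) (h : a * a < b * b) : a < b := by
  by_contra h'
  push_neg at h'
  nlinarith [mul_le_mul h' h' hb (le_trans hb h')]

lemma mf_ortho_nonneg (m : ℕ) {y v : Fin (m+1) → ℝ} (hy : mf m y y ≤ 0)
    (hy0 : y 0 ≠ 0) (hvy : mf m v y = 0) : 0 ≤ mf m v v := by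
  have cs := mf_cs m v y
  have hQv := mf_sum_sq_nonneg m v
  have h0 : 0 < y 0 * y 0 := mul_self_pos.mpr hy0
  simp only [mf] at hy hvy ⊢
  set Qv := ∑ i : Fin m, v i.succ * v i.succ with hQvdef
  set Qy := ∑ i : Fin m, y i.succ * y i.succ with hQydef
  set s := ∑ i : Fin m, v i.succ * y i.succ with hsdef
  have hs : v 0 * y 0 = s := by linarith
  have h1 : Qv * Qy ≤ Qv * (y 0 * y 0) := mul_le_mul_of_nonneg_left (by linarith) hQv
  have h2 : (v 0 * v 0) * (y 0 * y 0) = s * s := by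
    rw [show (v 0 * v 0) * (y 0 * y 0) = (v 0 * y 0) * (v 0 * y 0) from by ring, hs]
  have h3 : v 0 * v 0 ≤ Qv := le_of_mul_le_mul_right (by linarith) h0
  linarith

lemma mf_neg_of_causal (m : ℕ) {x y : Fin (m+1) → ℝ} (hx : mf m x x ≤ 0) (hx0 : 0 < x 0)
    (hy : mf m y y < 0) (hy0 : 0 < y 0) : mf m x y < 0 := by
  have cs := mf_cs m x y
  have hQy := mf_sum_sq_nonneg m y
  simp only [mf] at hx hy ⊢
  set Qx := ∑ i : Fin m, x i.succ * x i.succ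
  set Qy := ∑ i : Fin m, y i.succ * y i.succ
  set s := ∑ i : Fin m, x i.succ * y i.succ
  have h1 : Qx * Qy ≤ (x 0 * x 0) * Qy := mul_le_mul_of_nonneg_right (by linarith) hQy
  have h2 : (x 0 * x 0) * Qy < (x 0 * x 0) * (y 0 * y 0) :=
    mul_lt_mul_of_pos_left (by linarith) (by positivity)
  have h3 : s < x 0 * y 0 := by
    rcases le_or_gt s 0 with h | h
    · nlinarith [mul_pos hx0 hy0]
    · have : s * s < (x 0 * y 0) * (x 0 * y 0) := by nlinarith
      exact mself_lt (by positivity) this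
  linarith

lemma mf_nonpos_of_causal (m : ℕ) {x y : Fin (m+1) → ℝ} (hx : mf m x x ≤ 0) (hx0 : 0 < x 0)
    (hy : mf m y y ≤ 0) (hy0 : 0 < y 0) : mf m x y ≤ 0 := by
  have cs := mf_cs m x y
  have hQy := mf_sum_sq_nonneg m y
  simp only [mf] at hx hy ⊢
  set Qx := ∑ i : Fin m, x i.succ * x i.succ
  set Qy := ∑ i : Fin m, y i.succ * y i.succ
  set s := ∑ i : Fin m, x i.succ * y i.succ
  have h1 : Qx * Qy ≤ (x 0 * x 0) * Qy := mul_le_mul_of_nonneg_right (by linarith) hQy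
  have h2 : (x 0 * x 0) * Qy ≤ (x 0 * x 0) * (y 0 * y 0) :=
    mul_le_mul_of_nonneg_left (by linarith) (by positivity)
  have h3 : s ≤ x 0 * y 0 := by
    apply mself_le (by positivity)
    nlinarith
  linarith

lemma mf_pos0_of_timelike (m : ℕ) {v y : Fin (m+1) → ℝ} (hv : mf m v v < 0)
    (hy : mf m y y < 0) (hy0 : 0 < y 0) (hvy : mf m v y < 0) : 0 < v 0 := by
  by_contra h
  push_neg at h
  have cs := mf_cs m v y
  have hQv := mf_sum_sq_nonneg m v
  have hQy := mf_sum_sq_nonneg m y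
  simp only [mf] at hv hy hvy
  set Qv := ∑ i : Fin m, v i.succ * v i.succ
  set Qy := ∑ i : Fin m, y i.succ * y i.succ
  set s := ∑ i : Fin m, v i.succ * y i.succ
  have hprod : Qv * Qy < (v 0 * v 0) * (y 0 * y 0) :=
    mul_lt_mul'' (by linarith) (by linarith) hQv hQy
  have hs : s < v 0 * y 0 := by linarith
  have hvy0 : v 0 * y 0 ≤ 0 := mul_nonpos_iff.mpr (Or.inr ⟨h, le_of_lt hy0⟩)
  nlinarith [mul_pos (show (0:ℝ) < v 0 * y 0 - s by linarith)
    (show (0:ℝ) < -(s + v 0 * y 0) by linarith)]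

lemma mf_hyp_one (m : ℕ) {x y : Fin (m+1) → ℝ} (hx : x ∈ Hyp m) (hy : y ∈ Hyp m) :
    1 ≤ -mf m x y := by
  obtain ⟨hx1, hx0⟩ := hx
  obtain ⟨hy1, hy0⟩ := hy
  have cs := mf_cs m x y
  have hQx := mf_sum_sq_nonneg m x
  have hQy := mf_sum_sq_nonneg m y
  simp only [mf] at hx1 hy1 ⊢
  set Qx := ∑ i : Fin m, x i.succ * x i.succ
  set Qy := ∑ i : Fin m, y i.succ * y i.succ
  set s := ∑ i : Fin m, x i.succ * y i.succ
  have hsum : 2 * s ≤ Qx + Qy := by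
    apply mself_le (by positivity)
    nlinarith [sq_nonneg (Qx - Qy)]
  rcases le_or_gt (1 + s) 0 with h | h
  · nlinarith [mul_pos hx0 hy0]
  · have h1 : (1 + s) * (1 + s) ≤ (x 0 * y 0) * (x 0 * y 0) := by nlinarith
    have h2 : 1 + s ≤ x 0 * y 0 := mself_le (by positivity) h1
    linarith

lemma acosh_nonneg {z : ℝ} (hz : 1 ≤ z) : 0 ≤ acosh z :=
  Real.log_nonneg (by nlinarith [Real.sqrt_nonneg (z ^ 2 - 1)])

lemma acosh_lt_of_lt_cosh {z R : ℝ} (hz : 0 < z) (hR : 0 < R) (h : z < Real.cosh R) :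
    acosh z < R := by
  have hsinh : 0 < Real.sinh R := Real.sinh_pos_iff.mpr hR
  have hs : Real.sqrt (z ^ 2 - 1) < Real.sinh R := by
    rw [Real.sqrt_lt' hsinh]
    nlinarith [Real.cosh_sq R]
  have hlog : z + Real.sqrt (z ^ 2 - 1) < Real.exp R := by
    rw [← Real.cosh_add_sinh]
    linarith
  calc acosh z = Real.log (z + Real.sqrt (z ^ 2 - 1)) := rfl
    _ < Real.log (Real.exp R) := Real.log_lt_log (by positivity) hlog
    _ = R := Real.log_exp R

lemma lt_cosh_of_acosh_lt {z R : ℝ} (hz : 1 ≤ z) (hR : 0 ≤ R) (h : acosh z < R) :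
    z < Real.cosh R := by
  by_contra hcon
  push_neg at hcon
  have hsinh : 0 ≤ Real.sinh R := Real.sinh_nonneg_iff.mpr hR
  have h1 : Real.sinh R ≤ Real.sqrt (z ^ 2 - 1) := by
    rw [show Real.sinh R = Real.sqrt (Real.sinh R ^ 2) from (Real.sqrt_sq hsinh).symm]
    apply Real.sqrt_le_sqrt
    nlinarith [Real.cosh_sq R, Real.cosh_pos R, hz]
  have h2 : Real.exp R ≤ z + Real.sqrt (z ^ 2 - 1) := by
    rw [← Real.cosh_add_sinh]
    linarith
  have h3 : Real.log (Real.exp R) ≤ Real.log (z + Real.sqrt (z ^ 2 - 1)) :=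
    Real.log_le_log (Real.exp_pos R) h2
  rw [Real.log_exp] at h3
  exact absurd h (not_lt.mpr h3)


lemma algB {M P : ℝ} (hP : 0 < P) (hM : 0 < M) :
    4*P^2 + 2*M*P - 1 ≤ (1 + M^2) * (4*P^2) := by
  nlinarith [sq_nonneg (2*M*P - 1)]

lemma algC {c vh X : ℝ} (h : 0 ≤ -c^2 - vh^2 + 2*c*vh*X) :
    c^2 + vh^2 ≤ -X * (2*c*(-vh)) := by nlinarith

lemma algD {M E : ℝ} (hM : 0 < M) (hE1 : 1 < E) (hcon : E ≤ M) : 1 < M*E := by nlinarith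

lemma algE2 {X e1 : ℝ} (he : (2.7:ℝ) < e1) (hX : e1 < X) : 1 < X*(e1-2) := by
  nlinarith [mul_nonneg (by linarith : (0:ℝ) ≤ X - e1) (by linarith : (0:ℝ) ≤ e1 - 2)]

lemma algF {M s : ℝ} (hM : 0 < M) (h : M < s) : 1 + M^2 < s^2 + 1 := by nlinarith

lemma algG {f a ch : ℝ} (h2 : f^2 ≤ a) (h1 : a < ch^2) : f*f < ch*ch := by nlinarith

set_option maxHeartbeats 2000000 in
set_option maxHeartbeats 2000000 in
/-- Reduction of the horosphere/geodesic-plane distance estimate from `ℍ²` to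
`ℍ^{k+1}`: the horosphere `χ` rests at the future null direction `u` (it is the level
set `⟨x,u⟩ = -c`), the geodesic `k`-plane `P` is cut out by a `(k+1)`-dimensional
linear subspace `W`, `ξ` is a null direction `w` in `W`, and `q` is the intersection
of the geodesic joining `ξ` and `u` (i.e. `Hyp ∩ span{w,u}`) with `χ`. Assuming the
estimate for `k = 1` with constant `R₀`, the same constant works in dimension
`k ≥ 2`. -/
theorem horosphere_plane_distance_reduction (k : ℕ) (hk : 2 ≤ k)
    (R₀ : ℝ) (hR₀ : 1 < R₀)
    (hbase : ∀ R : ℝ, R₀ < R → ∀ (u w q : Fin 3 → ℝ) (c : ℝ)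
        (W : Submodule ℝ (Fin 3 → ℝ)),
        0 < c → mf 2 u u = 0 → u ≠ 0 → 0 < u 0 →
        Module.finrank ℝ W = 2 → (Hyp 2 ∩ (W : Set (Fin 3 → ℝ))).Nonempty →
        w ∈ W → mf 2 w w = 0 → w ≠ 0 → 0 < w 0 → (¬ ∃ t : ℝ, u = t • w) →
        q ∈ Hyp 2 → q ∈ (Submodule.span ℝ {w, u} : Set (Fin 3 → ℝ)) →
        mf 2 q u = -c →
        setDist 2 {x | x ∈ Hyp 2 ∧ mf 2 x u = -c} (Hyp 2 ∩ (W : Set (Fin 3 → ℝ)))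
          < R - 1 →
        setDist 2 {q} (Hyp 2 ∩ (W : Set (Fin 3 → ℝ))) < R) :
    ∀ R : ℝ, R₀ < R → ∀ (u w q : Fin (k + 2) → ℝ) (c : ℝ)
        (W : Submodule ℝ (Fin (k + 2) → ℝ)),
        0 < c → mf (k + 1) u u = 0 → u ≠ 0 → 0 < u 0 →
        Module.finrank ℝ W = k + 1 →
        (Hyp (k + 1) ∩ (W : Set (Fin (k + 2) → ℝ))).Nonempty →
        w ∈ W → mf (k + 1) w w = 0 → w ≠ 0 → 0 < w 0 → (¬ ∃ t : ℝ, u = t • w) →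
        q ∈ Hyp (k + 1) → q ∈ (Submodule.span ℝ {w, u} : Set (Fin (k + 2) → ℝ)) →
        mf (k + 1) q u = -c →
        setDist (k + 1) {x | x ∈ Hyp (k + 1) ∧ mf (k + 1) x u = -c}
            (Hyp (k + 1) ∩ (W : Set (Fin (k + 2) → ℝ))) < R - 1 →
        setDist (k + 1) {q} (Hyp (k + 1) ∩ (W : Set (Fin (k + 2) → ℝ))) < R := by
  intro R hR u w q c W hc huu hune hupos hrank hne hwW hww hwne hwpos hnp hqH hqspan hqu hlt
  have hR1 : (1:ℝ) < R := lt_trans hR₀ hR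
  -- extract a close pair (x, y)
  unfold setDist at hlt
  have hbddS : BddBelow {r | ∃ x ∈ {x | x ∈ Hyp (k+1) ∧ mf (k+1) x u = -c},
      ∃ y ∈ Hyp (k+1) ∩ (W : Set (Fin (k+2) → ℝ)), r = hdist (k+1) x y} := by
    refine ⟨0, fun r hr => ?_⟩
    obtain ⟨x, hx, y, hy, rfl⟩ := hr
    exact acosh_nonneg (mf_hyp_one (k+1) hx.1 hy.1)
  have hSne : {r | ∃ x ∈ {x | x ∈ Hyp (k+1) ∧ mf (k+1) x u = -c},
      ∃ y ∈ Hyp (k+1) ∩ (W : Set (Fin (k+2) → ℝ)), r = hdist (k+1) x y}.Nonempty := by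
    obtain ⟨y0, hy0⟩ := hne
    exact ⟨hdist (k+1) q y0, q, ⟨hqH, hqu⟩, y0, hy0, rfl⟩
  obtain ⟨r, hrmem, hrlt⟩ := (csInf_lt_iff hbddS hSne).mp hlt
  obtain ⟨x, hxS, y, hyT, rfl⟩ := hrmem
  obtain ⟨hxH, hxu⟩ := hxS
  obtain ⟨hyH, hyW⟩ := hyT
  have hyy : mf (k+1) y y = -1 := hyH.1
  have hy0 : 0 < y 0 := hyH.2
  have hxx : mf (k+1) x x = -1 := hxH.1
  -- basic scalar quantities
  set bv := mf (k+1) w u with hbvdef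
  set vg := mf (k+1) w y with hvgdef
  set vh := mf (k+1) u y with hvhdef
  clear_value bv vg vh
  have hG : vg < 0 := by
    rw [hvgdef]
    exact mf_neg_of_causal (k+1) (le_of_eq hww) hwpos (by rw [hyy]; norm_num) hy0
  have hH : vh < 0 := by
    rw [hvhdef]
    exact mf_neg_of_causal (k+1) (le_of_eq huu) hupos (by rw [hyy]; norm_num) hy0
  -- span representation of q
  obtain ⟨a, β, hrep⟩ := Submodule.mem_span_pair.mp hqspan
  have expand : ∀ z, mf (k+1) q z = a * mf (k+1) w z + β * mf (k+1) u z := by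
    intro z
    rw [← hrep, mf_add_left, mf_smul_left, mf_smul_left]
  have habv : a * bv = -c := by
    have h1 := expand u
    rw [hqu, huu] at h1
    rw [hbvdef]; linarith
  have hbvne : bv ≠ 0 := by
    intro h0
    rw [h0, mul_zero] at habv
    linarith
  have hbvle : bv ≤ 0 := by
    rw [hbvdef]
    exact mf_nonpos_of_causal (k+1) (le_of_eq hww) hwpos (le_of_eq huu) hupos
  have hbv : bv < 0 := lt_of_le_of_ne hbvle hbvne
  have hcne : c ≠ 0 := ne_of_gt hc
  have hgne : vg ≠ 0 := ne_of_lt hG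
  have hhne : vh ≠ 0 := ne_of_lt hH
  have hqw : mf (k+1) q w = β * bv := by
    have h1 := expand w
    rw [hww, mf_comm (k+1) u w] at h1
    rw [h1, hbvdef]; ring
  have hβ : β = 1/(2*c) := by
    have h1 := expand q
    rw [hqH.1, mf_comm (k+1) w q, hqw, mf_comm (k+1) u q, hqu] at h1
    have h2 : a * (β * bv) = β * (-c) := by rw [show a * (β * bv) = β * (a * bv) from by ring, habv]
    have h3 : -1 = β * (-c) + β * (-c) := by rw [← h2]; linarith
    field_simp
    linarith
  have ha : a = -c/bv := (eq_div_iff hbvne).mpr habv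
  have hqy : mf (k+1) q y = a * vg + β * vh := by
    rw [hvgdef, hvhdef]
    exact expand y
  -- the key inequality from the hypothesis pair: C ≥ (c² + vh²)/(2c(-vh))
  have hCiq : 0 ≤ -c^2 - vh^2 + 2*c*vh*(mf (k+1) x y) := by
    have hv1u : mf (k+1) (c • y + vh • x) u = 0 := by
      rw [mf_add_left, mf_smul_left, mf_smul_left, mf_comm (k+1) y u, hxu, ← hvhdef]
      ring
    have hv1 := mf_ortho_nonneg (k+1) (le_of_eq huu) (ne_of_gt hupos) hv1u
    have he : mf (k+1) (c • y + vh • x) (c • y + vh • x)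
        = -c^2 - vh^2 + 2*c*vh*(mf (k+1) x y) := by
      simp only [mf_add_left, mf_add_right, mf_smul_left, mf_smul_right]
      rw [hyy, hxx, mf_comm (k+1) y x]
      ring
    rw [he] at hv1
    exact hv1
  -- the key geometric inequality 2*vg*vh + bv ≥ 0
  have h2gh : 0 ≤ 2*vg*vh + bv := by
    have hpy : mf (k+1) ((-vh) • w + ((-vg) • u + (-(2*vg*vh)) • y)) y = 0 := by
      simp only [mf_add_left, mf_smul_left]
      rw [← hvgdef, ← hvhdef, hyy]
      ring
    have hpp := mf_ortho_nonneg (k+1) (by rw [hyy]; norm_num) (ne_of_gt hy0) hpy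
    have he : mf (k+1) ((-vh) • w + ((-vg) • u + (-(2*vg*vh)) • y))
        ((-vh) • w + ((-vg) • u + (-(2*vg*vh)) • y)) = 2*vg*vh*bv + 4*vg^2*vh^2 := by
      simp only [mf_add_left, mf_add_right, mf_smul_left, mf_smul_right]
      rw [hww, huu, hyy, mf_comm (k+1) u w, mf_comm (k+1) y w, mf_comm (k+1) y u,
        ← hbvdef, ← hvgdef, ← hvhdef]
      ring
    rw [he] at hpp
    have hgh : 0 < vg * vh := mul_pos_of_neg_of_neg hG hH
    nlinarith [hpp, hgh]
  -- scalar setup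
  set P := c*vg/bv with hPdef
  set M := -vh/c with hMdef
  have hP : 0 < P := by
    rw [hPdef]
    exact div_pos_of_neg_of_neg (mul_neg_of_pos_of_neg hc hG) hbv
  have hM : 0 < M := by
    rw [hMdef]
    exact div_pos (by linarith) hc
  clear_value P M
  have hMP : 1 ≤ 2*M*P := by
    have he : 2*M*P*(-bv) = 2*vg*vh := by
      rw [hMdef, hPdef]
      field_simp
    have hbv' : (0:ℝ) < -bv := by linarith
    have h1 : 1*(-bv) ≤ (2*M*P)*(-bv) := by rw [he]; linarith [h2gh]
    exact le_of_mul_le_mul_right h1 hbv'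
  set A := P + M/2 with hAdef
  set K := 1/(4*P) with hKdef
  clear_value A K
  have hK : 0 < K := by rw [hKdef]; positivity
  have hAK : 0 < A - K := by
    have h1 : M/2 - 1/(4*P) = (2*M*P - 1)/(4*P) := by field_simp; ring
    have h2 : 0 ≤ M/2 - 1/(4*P) := by
      rw [h1]
      exact div_nonneg (by linarith) (by positivity)
    rw [hAdef, hKdef]
    linarith
  set t := Real.sqrt ((A - K)/K) with htdef
  have ht : 0 < t := Real.sqrt_pos.mpr (div_pos hAK hK)
  have ht2 : t^2 = (A-K)/K := Real.sq_sqrt (le_of_lt (div_pos hAK hK))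
  have htK : K * t^2 = A - K := by
    rw [ht2]
    field_simp
  clear_value t
  set d := (t - 1/t)/(-2*vg) with hddef
  clear_value d
  set y' := (1/t) • y + d • w with hy'def
  have hy'W : y' ∈ W := W.add_mem (W.smul_mem _ hyW) (W.smul_mem _ hwW)
  have hy'y' : mf (k+1) y' y' = -1 := by
    rw [hy'def]
    simp only [mf_add_left, mf_add_right, mf_smul_left, mf_smul_right]
    rw [hyy, hww, mf_comm (k+1) y w, ← hvgdef, hddef]
    have htne : t ≠ 0 := ne_of_gt ht
    field_simp
    ring
  have hy'y : mf (k+1) y' y = -(1/(2*t)) - t/2 := by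
    rw [hy'def]
    simp only [mf_add_left, mf_smul_left]
    rw [hyy, ← hvgdef, hddef]
    have htne : t ≠ 0 := ne_of_gt ht
    field_simp
    ring
  have hy'H : y' ∈ Hyp (k+1) := by
    refine ⟨hy'y', ?_⟩
    have h1t : 0 < 1/(2*t) := by positivity
    exact mf_pos0_of_timelike (k+1) (by rw [hy'y']; norm_num) (by rw [hyy]; norm_num) hy0
      (by rw [hy'y]; linarith)
  -- the value -mf q y'
  have hqy' : mf (k+1) q y' = -(K*t + (A - K)/t) := by
    rw [mf_comm (k+1) q y', hy'def]
    simp only [mf_add_left, mf_smul_left]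
    rw [mf_comm (k+1) y q, mf_comm (k+1) w q, hqy, hqw, ha, hβ, hddef, hAdef, hKdef, hPdef,
      hMdef]
    field_simp
    ring
  have hF2 : K*t + (A-K)/t = 2*(K*t) := by
    have h1 : (A-K)/t = K*t := by
      rw [← htK]
      field_simp
    rw [h1]; ring
  have hFpos : 0 < K*t + (A-K)/t := by
    rw [hF2]; positivity
  have hFsq : (K*t + (A-K)/t)^2 ≤ 1 + M^2 := by
    rw [hF2]
    have h1 : (2*(K*t))^2 = 4*(K*t^2)*K := by ring
    rw [h1, htK, hAdef, hKdef]
    have h2 : 4*(P + M/2 - 1/(4*P))*(1/(4*P)) = (4*P^2 + 2*M*P - 1)/(4*P^2) := by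
      field_simp
      ring
    rw [h2, div_le_iff₀ (by positivity : (0:ℝ) < 4*P^2)]
    exact algB hP hM
  -- bound M < sinh R
  have hC1 : 1 ≤ -(mf (k+1) x y) := mf_hyp_one (k+1) hxH hyH
  have hC2 : -(mf (k+1) x y) < Real.cosh (R-1) :=
    lt_cosh_of_acosh_lt hC1 (by linarith) hrlt
  have hCM : (M + 1/M)/2 ≤ -(mf (k+1) x y) := by
    have hnv : (0:ℝ) < -vh := neg_pos.mpr hH
    have hden : (0:ℝ) < 2*c*(-vh) := mul_pos (mul_pos (by norm_num) hc) hnv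
    have he : (M + 1/M)/2 = (c^2 + vh^2)/(2*c*(-vh)) := by
      rw [hMdef]
      field_simp
      ring
    rw [he, div_le_iff₀ hden]
    exact algC hCiq
  have hMexp : M < Real.exp (R-1) := by
    set E := Real.exp (R-1) with hEdef
    have hE1 : 1 < E := by
      rw [hEdef]
      exact Real.one_lt_exp_iff.mpr (by linarith)
    clear_value E
    have hcosh : 2*Real.cosh (R-1) = E + 1/E := by
      rw [hEdef, Real.cosh_eq, Real.exp_neg]
      field_simp
    have hMcosh : M + 1/M < E + 1/E := by
      rw [← hcosh]
      linarith
    by_contra hcon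
    push_neg at hcon
    have hEpos : 0 < E := by linarith
    have key : (M + 1/M) - (E + 1/E) = (M - E)*(M*E - 1)/(M*E) := by
      field_simp
      ring
    have hME : 1 < M*E := algD hM hE1 hcon
    have : 0 ≤ (M - E)*(M*E - 1)/(M*E) :=
      div_nonneg (mul_nonneg (by linarith) (by linarith)) (by positivity)
    linarith
  have hsinh : Real.exp (R-1) ≤ Real.sinh R := by
    rw [Real.sinh_eq, Real.exp_sub, Real.exp_neg]
    set X := Real.exp R with hXdef
    set e1 := Real.exp 1 with he1def
    clear_value X e1
    have hXpos : 0 < X := by rw [hXdef]; exact Real.exp_pos R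
    have hepos : (0:ℝ) < e1 := by rw [he1def]; exact Real.exp_pos 1
    have hX : e1 < X := by
      rw [hXdef, he1def]
      exact Real.exp_lt_exp.mpr hR1
    have he : (2.7:ℝ) < e1 := by
      rw [he1def]
      exact lt_trans (by norm_num) Real.exp_one_gt_d9
    rw [div_le_div_iff₀ hepos two_pos]
    have h1 : X⁻¹ * e1 < 1 := by
      have := mul_lt_mul_of_pos_left hX (inv_pos.mpr hXpos)
      rwa [inv_mul_cancel₀ (ne_of_gt hXpos)] at this
    have h2 : 1 < X*(e1-2) := algE2 he hX
    have h3 : (X - X⁻¹)*e1 = X*e1 - X⁻¹*e1 := by ring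
    linarith
  have hMsinh : M < Real.sinh R := lt_of_lt_of_le hMexp hsinh
  have hFcosh : K*t + (A-K)/t < Real.cosh R := by
    have h1 : 1 + M^2 < (Real.cosh R)^2 := by
      rw [Real.cosh_sq]
      exact algF hM hMsinh
    have h2 : (K*t + (A-K)/t) * (K*t + (A-K)/t) < Real.cosh R * Real.cosh R := by
      exact algG hFsq h1
    exact mself_lt (le_of_lt (Real.cosh_pos R)) h2
  -- conclude
  have hdy' : hdist (k+1) q y' < R := by
    show acosh (-(mf (k+1) q y')) < R
    rw [hqy', neg_neg]
    exact acosh_lt_of_lt_cosh hFpos (by linarith) hFcosh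
  unfold setDist
  have hbdd2 : BddBelow {r | ∃ x ∈ ({q} : Set (Fin (k+2) → ℝ)),
      ∃ y ∈ Hyp (k+1) ∩ (W : Set (Fin (k+2) → ℝ)), r = hdist (k+1) x y} := by
    refine ⟨0, fun r hr => ?_⟩
    obtain ⟨x', hx', y'', hy'', rfl⟩ := hr
    have hx'q : x' = q := hx'
    exact acosh_nonneg (mf_hyp_one (k+1) (hx'q ▸ hqH) hy''.1)
  have hmem : hdist (k+1) q y' ∈ {r | ∃ x ∈ ({q} : Set (Fin (k+2) → ℝ)),
      ∃ y ∈ Hyp (k+1) ∩ (W : Set (Fin (k+2) → ℝ)), r = hdist (k+1) x y} :=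
    ⟨q, rfl, y', ⟨hy'H, hy'W⟩, rfl⟩
  exact lt_of_le_of_lt (csInf_le hbdd2 hmem) hdy'
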